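/- Let K/L be an extension of number fields with gcd([K:L], e) = 1 for an odd prime e, and suppose L contains a primitive e-th root of unity ζ_e. Let 𝔭 be a nonzero prime ideal of O_L, coprime to e, that is inert in K, and write 𝔓 = 𝔭O_K. Let x, x' ∈ O_K with x ∉ 𝔓, such that x^e ≡ (x')^e (mod 𝔓) and N_{K/L}(x) ≡ N_{K/L}(x') (mod 𝔭). Then x ≡ x' (mod 𝔓). -/

import Mathlib

open NumberField

section Aux

variable {L K : Type*} [Field L] [NumberField L] [Field K] [NumberField K]
    [Algebra L K] [FiniteDimensional L K]

/-- The norm of an algebraic integer is (the image of) an algebraic integer. -/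
lemma exists_norm_ringOfIntegers (y : 𝓞 K) :
    ∃ m : 𝓞 L, algebraMap (𝓞 L) L m = Algebra.norm L (algebraMap (𝓞 K) K y) := by
  have h : IsIntegral ℤ (Algebra.norm L (algebraMap (𝓞 K) K y)) :=
    Algebra.isIntegral_norm (R := ℤ) (K := L) (L := K) (y.isIntegral_coe)
  exact ⟨⟨_, h⟩, rfl⟩

set_option maxHeartbeats 2000000 in
set_option synthInstance.maxHeartbeats 400000 in
/-- Key divisibility: `N(y + a•t) - N(y)` is divisible by `a` in `𝓞 L`. -/
lemma norm_add_smul_sub (a : 𝓞 L) (t y : 𝓞 K) :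
    ∃ m : 𝓞 L,
      Algebra.norm L (algebraMap (𝓞 K) K (y + a • t))
        - Algebra.norm L (algebraMap (𝓞 K) K y) = algebraMap (𝓞 L) L (a * m) := by
  rcases eq_or_ne a 0 with rfl | ha
  · exact ⟨0, by simp⟩
  set AC := AlgebraicClosure L with hAC
  have inj : Function.Injective (algebraMap L AC) := (algebraMap L AC).injective
  set a' : L := algebraMap (𝓞 L) L a with ha'def
  have ha'0 : a' ≠ 0 := by
    simpa [ha'def] using
      fun h => ha ((FaithfulSMul.algebraMap_injective (𝓞 L) L) (by simpa using h))
  have hsmul : algebraMap (𝓞 K) K (a • t)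
      = algebraMap L K a' * algebraMap (𝓞 K) K t := by
    rw [Algebra.smul_def, map_mul, ← IsScalarTower.algebraMap_apply,
      IsScalarTower.algebraMap_apply (𝓞 L) L K]
  set d : L := Algebra.norm L (algebraMap (𝓞 K) K (y + a • t))
      - Algebra.norm L (algebraMap (𝓞 K) K y) with hd
  let B : (K →ₐ[L] AC) → integralClosure ℤ AC := fun σ =>
    ⟨σ (algebraMap (𝓞 K) K y), (y.isIntegral_coe).map σ.toRingHom.toIntAlgHom⟩
  let Z : (K →ₐ[L] AC) → integralClosure ℤ AC := fun σ =>
    ⟨σ (algebraMap (𝓞 K) K t), (t.isIntegral_coe).map σ.toRingHom.toIntAlgHom⟩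
  let α : integralClosure ℤ AC :=
    ⟨algebraMap L AC a', (a.isIntegral_coe).map (algebraMap L AC).toIntAlgHom⟩
  have hdvd : α ∣ (∏ σ : K →ₐ[L] AC, (B σ + α * Z σ)) - ∏ σ : K →ₐ[L] AC, B σ := by
    rw [← Ideal.mem_span_singleton, ← Ideal.Quotient.eq, map_prod, map_prod]
    refine Finset.prod_congr rfl fun σ _ => ?_
    have h0 : Ideal.Quotient.mk (Ideal.span {α}) (α * Z σ) = 0 :=
      Ideal.Quotient.eq_zero_iff_mem.mpr
        (Ideal.mul_mem_right _ _ (Ideal.subset_span rfl))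
    rw [map_add, h0, add_zero]
  obtain ⟨c, hc⟩ := hdvd
  have hcic : IsIntegral ℤ (c : AC) := c.2
  have hval : (∏ σ : K →ₐ[L] AC, ((B σ : AC) + (α : AC) * (Z σ : AC)))
      - (∏ σ : K →ₐ[L] AC, (B σ : AC)) = (α : AC) * (c : AC) := by
    have := congrArg Subtype.val hc
    simpa [SubmonoidClass.coe_finset_prod] using this
  have key : algebraMap L AC d = algebraMap L AC a' * (c : AC) := by
    have h1 : ∀ σ : K →ₐ[L] AC, σ (algebraMap (𝓞 K) K (y + a • t))
        = (B σ : AC) + (α : AC) * (Z σ : AC) := by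
      intro σ
      rw [map_add, hsmul, map_add, map_mul, σ.commutes]
    rw [hd, map_sub,
      Algebra.norm_eq_prod_embeddings (K := L) (L := K) (E := AC),
      Algebra.norm_eq_prod_embeddings (K := L) (L := K) (E := AC)]
    rw [show (∏ σ : K →ₐ[L] AC, σ (algebraMap (𝓞 K) K (y + a • t)))
        = ∏ σ : K →ₐ[L] AC, ((B σ : AC) + (α : AC) * (Z σ : AC)) from
      Finset.prod_congr rfl fun σ _ => h1 σ]
    exact hval
  have hcval : (c : AC) = algebraMap L AC (d / a') := by
    rw [map_div₀, eq_div_iff (by exact fun h => ha'0 (inj (by simpa using h))), mul_comm]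
    exact key.symm
  have hint : IsIntegral ℤ (d / a') := by
    rw [← isIntegral_algebraMap_iff (A := L) (B := AC) inj]
    rw [← hcval]
    exact hcic
  refine ⟨(⟨d / a', (mem_integralClosure_iff (R := ℤ) (A := L)).mpr hint⟩ : 𝓞 L), ?_⟩
  change d = a' * (d / a')
  show d = a' * (d / a')
  rw [mul_comm, div_mul_cancel₀ _ ha'0]

/-- The norm map descends modulo an extended ideal. -/
lemma norm_sub_mem_of_sub_mem (p : Ideal (𝓞 L)) {y y' : 𝓞 K}
    (h : y - y' ∈ Ideal.map (algebraMap (𝓞 L) (𝓞 K)) p)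
    {m m' : 𝓞 L}
    (hm : algebraMap (𝓞 L) L m = Algebra.norm L (algebraMap (𝓞 K) K y))
    (hm' : algebraMap (𝓞 L) L m' = Algebra.norm L (algebraMap (𝓞 K) K y')) :
    m - m' ∈ p := by
  have inj : Function.Injective (algebraMap (𝓞 L) L) :=
    FaithfulSMul.algebraMap_injective _ _
  have key : ∀ π ∈ (p • (⊤ : Submodule (𝓞 L) (𝓞 K)) : Submodule (𝓞 L) (𝓞 K)),
      ∀ (z : 𝓞 K) (m m' : 𝓞 L),
        algebraMap (𝓞 L) L m = Algebra.norm L (algebraMap (𝓞 K) K (z + π)) →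
        algebraMap (𝓞 L) L m' = Algebra.norm L (algebraMap (𝓞 K) K z) →
        m - m' ∈ p := by
    intro π hπ
    refine Submodule.smul_induction_on hπ ?_ ?_
    · intro r hr n _ z m m' hm hm'
      obtain ⟨m₀, hm₀⟩ := norm_add_smul_sub (L := L) r n z
      have : algebraMap (𝓞 L) L (m - m') = algebraMap (𝓞 L) L (r * m₀) := by
        rw [map_sub, hm, hm', hm₀]
      have h2 : m - m' = r * m₀ := inj this
      rw [h2]
      exact Ideal.mul_mem_right _ _ hr
    · intro π₁ π₂ ih₁ ih₂ z m m' hm hm'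
      obtain ⟨m₁, hm₁⟩ := exists_norm_ringOfIntegers (L := L) (z + π₁)
      have h1 : m - m₁ ∈ p := by
        refine ih₂ (z + π₁) m m₁ ?_ hm₁
        rw [hm, add_assoc]
      have h2 : m₁ - m' ∈ p := ih₁ z m₁ m' hm₁ hm'
      simpa using add_mem h1 h2
  have hmem : y - y' ∈ (p • (⊤ : Submodule (𝓞 L) (𝓞 K)) : Submodule (𝓞 L) (𝓞 K)) := by
    rw [Ideal.smul_top_eq_map]
    exact h
  have := key (y - y') hmem y' m m' (by rw [hm]; congr 1; ring) hm'
  exact this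

end Aux

set_option maxHeartbeats 1000000 in
set_option synthInstance.maxHeartbeats 1000000 in
theorem couveignes_residue_uniqueness
    (L K : Type*) [Field L] [NumberField L] [Field K] [NumberField K]
    [Algebra L K] [FiniteDimensional L K]
    (e : ℕ) (he : e.Prime) (hodd : Odd e)
    (hgcd : Nat.gcd (Module.finrank L K) e = 1)
    (ζ : L) (hζ : IsPrimitiveRoot ζ e)
    (p : Ideal (𝓞 L)) (hp : p.IsPrime) (hbot : p ≠ ⊥)
    (hpe : (e : 𝓞 L) ∉ p)
    (hinert : (Ideal.map (algebraMap (𝓞 L) (𝓞 K)) p).IsPrime)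
    (x x' : 𝓞 K) (hx : x ∉ Ideal.map (algebraMap (𝓞 L) (𝓞 K)) p)
    (hee : x ^ e - x' ^ e ∈ Ideal.map (algebraMap (𝓞 L) (𝓞 K)) p)
    (nx nx' : 𝓞 L)
    (hnx : algebraMap (𝓞 L) L nx = Algebra.norm L (algebraMap (𝓞 K) K x))
    (hnx' : algebraMap (𝓞 L) L nx' = Algebra.norm L (algebraMap (𝓞 K) K x'))
    (hnorm : nx - nx' ∈ p) :
    x - x' ∈ Ideal.map (algebraMap (𝓞 L) (𝓞 K)) p := by
  classical
  have hRL : Function.Injective (algebraMap (𝓞 L) L) :=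
    FaithfulSMul.algebraMap_injective _ _
  have hLK : Function.Injective (algebraMap L K) := (algebraMap L K).injective
  have finj : Function.Injective (algebraMap (𝓞 L) (𝓞 K)) := by
    intro u v huv
    apply hRL; apply hLK
    rw [← IsScalarTower.algebraMap_apply, ← IsScalarTower.algebraMap_apply,
      IsScalarTower.algebraMap_apply (𝓞 L) (𝓞 K) K,
      IsScalarTower.algebraMap_apply (𝓞 L) (𝓞 K) K, huv]
  obtain ⟨a0, ha0p, ha00⟩ := Submodule.exists_mem_ne_zero_of_ne_bot hbot
  have hPbot : Ideal.map (algebraMap (𝓞 L) (𝓞 K)) p ≠ ⊥ := by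
    intro hP0
    have h1 : algebraMap (𝓞 L) (𝓞 K) a0 ∈ (⊥ : Ideal (𝓞 K)) :=
      hP0 ▸ Ideal.mem_map_of_mem _ ha0p
    rw [Ideal.mem_bot] at h1
    exact ha00 (finj (by simpa using h1))
  haveI hpmax : p.IsMaximal := hp.isMaximal hbot
  haveI hPmax : (Ideal.map (algebraMap (𝓞 L) (𝓞 K)) p).IsMaximal := hinert.isMaximal hPbot
  letI : Field (𝓞 L ⧸ p) := Ideal.Quotient.field p
  letI : Field (𝓞 K ⧸ Ideal.map (algebraMap (𝓞 L) (𝓞 K)) p) := Ideal.Quotient.field _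
  -- the primitive root as an algebraic integer
  have hζint : IsIntegral ℤ ζ := hζ.isIntegral he.pos
  set zh : 𝓞 L := ⟨ζ, hζint⟩ with hzh
  have hzco : algebraMap (𝓞 L) L zh = ζ := rfl
  have hζR : IsPrimitiveRoot zh e := by
    have h := hζ
    rw [← hzco] at h
    exact h.of_map_of_injective hRL
  have hgeomR : ∑ i ∈ Finset.range e, zh ^ i = 0 := by
    apply hRL
    rw [map_sum, map_zero]
    simp only [map_pow, hzco]
    exact hζ.geom_sum_eq_zero he.one_lt
  -- ω : the reduction of the primitive root mod p
  set ω := Ideal.Quotient.mk p zh with hω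
  have hωe : ω ^ e = 1 := by rw [hω, ← map_pow, hζR.pow_eq_one, map_one]
  have hω1 : ω ≠ 1 := by
    intro h1
    have he0 : (e : 𝓞 L ⧸ p) = 0 := by
      have h2 := congrArg (Ideal.Quotient.mk p) hgeomR
      simp only [map_sum, map_pow, ← hω, h1, one_pow, map_zero, Finset.sum_const,
        Finset.card_range, nsmul_eq_mul, mul_one] at h2
      exact h2
    apply hpe
    rwa [← map_natCast (Ideal.Quotient.mk p), Ideal.Quotient.eq_zero_iff_mem] at he0
  have hordω : orderOf ω = e := by
    have hdvd : orderOf ω ∣ e := orderOf_dvd_of_pow_eq_one hωe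
    rcases (Nat.Prime.eq_one_or_self_of_dvd he _ hdvd) with h | h
    · exact absurd (orderOf_eq_one_iff.mp h) hω1
    · exact h
  have hωprim : IsPrimitiveRoot ω e :=
    ⟨hωe, fun l hl => hordω ▸ orderOf_dvd_of_pow_eq_one hl⟩
  -- the injection of residue fields
  have hle : p ≤ Ideal.comap (algebraMap (𝓞 L) (𝓞 K))
      (Ideal.map (algebraMap (𝓞 L) (𝓞 K)) p) := Ideal.le_comap_map
  set φ := Ideal.quotientMap (Ideal.map (algebraMap (𝓞 L) (𝓞 K)) p)
      (algebraMap (𝓞 L) (𝓞 K)) hle with hφ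
  have hφinj : Function.Injective φ := by
    apply Ideal.quotientMap_injective'
    have hne : Ideal.comap (algebraMap (𝓞 L) (𝓞 K))
        (Ideal.map (algebraMap (𝓞 L) (𝓞 K)) p) ≠ ⊤ := by
      intro h
      rw [Ideal.eq_top_iff_one, Ideal.mem_comap, map_one] at h
      exact hinert.ne_top ((Ideal.eq_top_iff_one _).mpr h)
    exact le_of_eq (hpmax.eq_of_le hne hle).symm
  -- residues of x and x'
  have hxbne : Ideal.Quotient.mk (Ideal.map (algebraMap (𝓞 L) (𝓞 K)) p) x ≠ 0 :=
    fun h => hx (Ideal.Quotient.eq_zero_iff_mem.mp h)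
  have hpows : (Ideal.Quotient.mk (Ideal.map (algebraMap (𝓞 L) (𝓞 K)) p) x') ^ e
      = (Ideal.Quotient.mk (Ideal.map (algebraMap (𝓞 L) (𝓞 K)) p) x) ^ e := by
    have h2 := Ideal.Quotient.eq.mpr hee
    rw [map_pow, map_pow] at h2
    exact h2.symm
  set u := Ideal.Quotient.mk (Ideal.map (algebraMap (𝓞 L) (𝓞 K)) p) x'
      * (Ideal.Quotient.mk (Ideal.map (algebraMap (𝓞 L) (𝓞 K)) p) x)⁻¹ with hu
  have hue : u ^ e = 1 := by
    rw [hu, mul_pow, inv_pow, hpows, mul_inv_cancel₀ (pow_ne_zero _ hxbne)]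
  haveI : NeZero e := ⟨he.ne_zero⟩
  have hφprim : IsPrimitiveRoot (φ ω) e := hωprim.map_of_injective hφinj
  obtain ⟨j, hj, hju⟩ := hφprim.eq_pow_of_pow_eq_one hue
  set c : 𝓞 L := zh ^ j with hc
  have hφω : φ ω = Ideal.Quotient.mk (Ideal.map (algebraMap (𝓞 L) (𝓞 K)) p)
      (algebraMap (𝓞 L) (𝓞 K) zh) := Ideal.quotientMap_mk
  have hmkc : Ideal.Quotient.mk (Ideal.map (algebraMap (𝓞 L) (𝓞 K)) p)
      (algebraMap (𝓞 L) (𝓞 K) c) = φ ω ^ j := by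
    rw [hφω, hc, map_pow, map_pow]
  have hy' : x' - algebraMap (𝓞 L) (𝓞 K) c * x ∈ Ideal.map (algebraMap (𝓞 L) (𝓞 K)) p := by
    refine Ideal.Quotient.eq.mp ?_
    rw [map_mul, hmkc, hju, hu, mul_assoc, inv_mul_cancel₀ hxbne, mul_one]
  have hnormy' : algebraMap (𝓞 L) L (c ^ Module.finrank L K * nx)
      = Algebra.norm L (algebraMap (𝓞 K) K (algebraMap (𝓞 L) (𝓞 K) c * x)) := by
    rw [map_mul, map_mul, hnx, map_pow,
      ← IsScalarTower.algebraMap_apply, IsScalarTower.algebraMap_apply (𝓞 L) L K,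
      map_mul, Algebra.norm_algebraMap]
  have h1 : nx' - c ^ Module.finrank L K * nx ∈ p :=
    norm_sub_mem_of_sub_mem p hy' hnx' hnormy'
  -- nx is not in p
  have hnxp : nx ∉ p := by
    intro hmem
    obtain ⟨w, hw⟩ := Ideal.Quotient.mk_surjective
      (I := Ideal.map (algebraMap (𝓞 L) (𝓞 K)) p)
      (Ideal.Quotient.mk (Ideal.map (algebraMap (𝓞 L) (𝓞 K)) p) x)⁻¹
    obtain ⟨nw, hnw⟩ := exists_norm_ringOfIntegers (L := L) w
    have hsub : x * w - 1 ∈ Ideal.map (algebraMap (𝓞 L) (𝓞 K)) p := by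
      refine Ideal.Quotient.eq.mp ?_
      rw [map_mul, hw, map_one, mul_inv_cancel₀ hxbne]
    have hmm : algebraMap (𝓞 L) L (nx * nw)
        = Algebra.norm L (algebraMap (𝓞 K) K (x * w)) := by
      rw [map_mul, map_mul, map_mul, hnx, hnw]
    have hone : algebraMap (𝓞 L) L (1 : 𝓞 L)
        = Algebra.norm L (algebraMap (𝓞 K) K (1 : 𝓞 K)) := by
      rw [map_one, map_one, map_one]
    have h2 : nx * nw - 1 ∈ p := norm_sub_mem_of_sub_mem p hsub hmm hone
    have h3 : (1 : 𝓞 L) ∈ p := by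
      have h4 : nx * nw ∈ p := Ideal.mul_mem_right _ _ hmem
      simpa using sub_mem h4 h2
    exact hp.ne_top ((Ideal.eq_top_iff_one _).mpr h3)
  -- conclude c^n ≡ 1 mod p
  have h2 : nx - c ^ Module.finrank L K * nx ∈ p := by
    simpa using add_mem hnorm h1
  have h3 : nx * (1 - c ^ Module.finrank L K) ∈ p := by
    have heq : nx * (1 - c ^ Module.finrank L K)
        = nx - c ^ Module.finrank L K * nx := by ring
    rwa [heq]
  have h4 : 1 - c ^ Module.finrank L K ∈ p := (hp.mem_or_mem h3).resolve_left hnxp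
  have h5 : ω ^ (j * Module.finrank L K) = 1 := by
    have hq : Ideal.Quotient.mk p (1 : 𝓞 L)
        = Ideal.Quotient.mk p (c ^ Module.finrank L K) := Ideal.Quotient.eq.mpr h4
    rw [map_one, hc, map_pow, map_pow, ← hω, ← pow_mul] at hq
    exact hq.symm
  have hedvd : e ∣ j * Module.finrank L K := hωprim.dvd_of_pow_eq_one _ h5
  have hdj : e ∣ j := by
    rcases (Nat.Prime.dvd_mul he).mp hedvd with h | h
    · exact h
    · exfalso
      have hde : e ∣ 1 := hgcd ▸ Nat.dvd_gcd h dvd_rfl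
      exact Nat.Prime.one_lt he |>.ne' (Nat.dvd_one.mp hde)
  have hu1 : u = 1 := by
    obtain ⟨q, rfl⟩ := hdj
    rw [← hju, pow_mul, hφprim.pow_eq_one, one_pow]
  have hfin : Ideal.Quotient.mk (Ideal.map (algebraMap (𝓞 L) (𝓞 K)) p) x
      = Ideal.Quotient.mk (Ideal.map (algebraMap (𝓞 L) (𝓞 K)) p) x' := by
    have h6 : Ideal.Quotient.mk (Ideal.map (algebraMap (𝓞 L) (𝓞 K)) p) x'
        = Ideal.Quotient.mk (Ideal.map (algebraMap (𝓞 L) (𝓞 K)) p)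
          (algebraMap (𝓞 L) (𝓞 K) c * x) := Ideal.Quotient.eq.mpr hy'
    rw [h6, map_mul, hmkc, hju, hu1, one_mul]
  exact Ideal.Quotient.eq.mp hfin
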